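/- Let k have characteristic zero, Ω ∈ k[x,y,z] homogeneous, and A_Ω the Poisson polynomial algebra with {f,g} = det(Jacobian of (f,g,Ω)). Let φ be a graded algebra automorphism of k[x,y,z] with Jacobian determinant J(φ) = det(∂(φ(x),φ(y),φ(z))/∂(x,y,z)) and suppose φ(Ω) = aΩ for some a ∈ k^×. Then for all f, g ∈ A_Ω: φ({f,g}) = a·J(φ)^{-1}·{φ(f), φ(g)}. In particular, φ is a Poisson automorphism of A_Ω if and only if φ(Ω) = J(φ)·Ω. -/

import Mathlib

open MvPolynomial

/-- The Jacobian-determinant Poisson bracket on `k[x,y,z]` with potential `Ω`: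
`{f, g} = det (∂(f,g,Ω)/∂(x,y,z))`. -/
noncomputable def jb {k : Type*} [CommRing k]
    (Ω f g : MvPolynomial (Fin 3) k) : MvPolynomial (Fin 3) k :=
  pderiv 0 f * (pderiv 1 g * pderiv 2 Ω - pderiv 2 g * pderiv 1 Ω)
  - pderiv 1 f * (pderiv 0 g * pderiv 2 Ω - pderiv 2 g * pderiv 0 Ω)
  + pderiv 2 f * (pderiv 0 g * pderiv 1 Ω - pderiv 1 g * pderiv 0 Ω)

/-- The Jacobian determinant `J(φ) = det (∂(φ(x), φ(y), φ(z))/∂(x,y,z))` of an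
endomorphism `φ` of `k[x,y,z]`. -/
noncomputable def jdet {k : Type*} [CommRing k]
    (φ : MvPolynomial (Fin 3) k →ₐ[k] MvPolynomial (Fin 3) k) :
    MvPolynomial (Fin 3) k :=
  Matrix.det (Matrix.of fun i j : Fin 3 => pderiv j (φ (X i)))

section Aux

variable {k : Type*} [CommRing k]

lemma aux_X_mul_pderiv_monomial (i : Fin 3) (s : Fin 3 →₀ ℕ) (c : k) :
    X i * pderiv i (monomial s c) = monomial s (c * s i) := by
  rw [pderiv_monomial, X, monomial_mul, one_mul]
  rcases Nat.eq_zero_or_pos (s i) with h | h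
  · simp [h]
  · congr 1
    rw [add_tsub_cancel_of_le]
    rw [Finsupp.single_le_iff]; exact h

lemma aux_euler {d : ℕ} {Ω : MvPolynomial (Fin 3) k} (hΩ : Ω.IsHomogeneous d) :
    ∑ i : Fin 3, X i * pderiv i Ω = (d : k) • Ω := by
  conv_lhs => rw [← Ω.support_sum_monomial_coeff]
  conv_rhs => rw [← Ω.support_sum_monomial_coeff, Finset.smul_sum]
  simp only [map_sum, Finset.mul_sum, aux_X_mul_pderiv_monomial]
  rw [Finset.sum_comm]
  refine Finset.sum_congr rfl fun s hs => ?_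
  have hdeg : s.degree = d := by
    by_contra h
    exact (MvPolynomial.mem_support_iff.mp hs) (hΩ.coeff_eq_zero h)
  have hsum : (∑ i : Fin 3, s i) = d := by
    rw [← hdeg, Finsupp.degree]
    exact (Finset.sum_subset (Finset.subset_univ _)
      (fun x _ hx => Finsupp.notMem_support_iff.mp hx)).symm
  rw [← map_sum (monomial s), ← Finset.mul_sum, ← Nat.cast_sum, hsum,
    ← map_smul (monomial s)]
  congr 1
  simp [mul_comm]

lemma aux_chain (ψ : MvPolynomial (Fin 3) k →ₐ[k] MvPolynomial (Fin 3) k)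
    (j : Fin 3) (p : MvPolynomial (Fin 3) k) :
    pderiv j (ψ p) = ∑ i : Fin 3, ψ (pderiv i p) * pderiv j (ψ (X i)) := by
  induction p using MvPolynomial.induction_on with
  | C c => simp
  | add p q hp hq => simp [hp, hq, add_mul, Finset.sum_add_distrib]
  | mul_X p n ih =>
      rw [map_mul, pderiv_mul, ih]
      have key : ∀ i : Fin 3, ψ (pderiv i (p * X n)) * pderiv j (ψ (X i))
          = ψ (pderiv i p) * pderiv j (ψ (X i)) * ψ (X n)
            + (if n = i then ψ p * pderiv j (ψ (X i)) else 0) := by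
        intro i
        rw [pderiv_mul, map_add, map_mul, map_mul, add_mul]
        congr 1
        · ring
        · rcases eq_or_ne n i with rfl | h
          · simp
          · simp [pderiv_X_of_ne h, h]
      simp only [key, Finset.sum_add_distrib, Finset.sum_ite_eq, Finset.mem_univ, if_true,
        ← Finset.sum_mul]

lemma aux_jb_eq_det (Ω f g : MvPolynomial (Fin 3) k) :
    jb Ω f g = Matrix.det (Matrix.of fun i j : Fin 3 => pderiv j (![f, g, Ω] i)) := by
  simp only [jb, Matrix.det_fin_three, Matrix.of_apply, Matrix.cons_val', Matrix.cons_val_zero,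
    Matrix.empty_val', Matrix.cons_val_fin_one, Matrix.cons_val_one, Matrix.head_cons,
    Matrix.head_fin_const, Matrix.cons_val_two, Matrix.tail_cons, Matrix.head_fin_const]
  ring

lemma aux_key (ψ : MvPolynomial (Fin 3) k →ₐ[k] MvPolynomial (Fin 3) k)
    (Ω f g : MvPolynomial (Fin 3) k) :
    ψ (jb Ω f g) * jdet ψ = jb (ψ Ω) (ψ f) (ψ g) := by
  rw [aux_jb_eq_det, aux_jb_eq_det, jdet, ψ.map_det, ← Matrix.det_mul]
  congr 1
  ext i j : 2
  rw [Matrix.mul_apply]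
  have h2 : (Matrix.of fun i j : Fin 3 => pderiv j (![ψ f, ψ g, ψ Ω] i)) i j
      = pderiv j (ψ (![f, g, Ω] i)) := by
    fin_cases i <;> rfl
  rw [h2, aux_chain ψ j]
  simp [AlgHom.mapMatrix_apply, Matrix.map_apply]

end Aux

/-- let `k` have characteristic zero, `Ω ∈ k[x,y,z]` (non-constant)
homogeneous, and `A_Ω` the Poisson polynomial algebra with bracket
`{f,g} = det ∂(f,g,Ω)`.  Let `φ` be a graded algebra automorphism of `k[x,y,z]`
with `φ(Ω) = a Ω` for some `a ∈ k^×`.  Then for all `f, g`: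
`φ({f,g}) = a · J(φ)^{-1} · {φ(f), φ(g)}` (stated multiplicatively as
`φ({f,g}) · J(φ) = a · {φ(f), φ(g)}`, `J(φ)` being a unit).  In particular,
`φ` is a Poisson automorphism of `A_Ω` if and only if `φ(Ω) = J(φ) · Ω`. -/
theorem stmt19 (k : Type*) [Field k] [CharZero k]
    (Ω : MvPolynomial (Fin 3) k) (d : ℕ) (hΩ : Ω.IsHomogeneous d)
    -- `Ω` is a (nonzero, non-constant) potential, cf. Construction 0.6:
    (hΩ0 : Ω ≠ 0) (hd : 0 < d)
    (φ : MvPolynomial (Fin 3) k ≃ₐ[k] MvPolynomial (Fin 3) k)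
    -- `φ` is graded:
    (hgr : ∀ (n : ℕ) (f : MvPolynomial (Fin 3) k),
      f.IsHomogeneous n → (φ f).IsHomogeneous n)
    (a : k) (ha : a ≠ 0) (hφΩ : φ Ω = a • Ω) :
    (∀ f g : MvPolynomial (Fin 3) k,
      φ (jb Ω f g) * jdet (φ : MvPolynomial (Fin 3) k →ₐ[k] MvPolynomial (Fin 3) k)
        = a • jb Ω (φ f) (φ g)) ∧
    ((∀ f g : MvPolynomial (Fin 3) k, φ (jb Ω f g) = jb Ω (φ f) (φ g)) ↔
      φ Ω = jdet (φ : MvPolynomial (Fin 3) k →ₐ[k] MvPolynomial (Fin 3) k) * Ω) := by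
  set ψ := (φ : MvPolynomial (Fin 3) k →ₐ[k] MvPolynomial (Fin 3) k) with hψ
  have hsmul : ∀ f g : MvPolynomial (Fin 3) k,
      jb (a • Ω) f g = a • jb Ω f g := by
    intro f g
    simp only [jb, smul_eq_C_mul, pderiv_C_mul]
    ring
  have part1 : ∀ f g : MvPolynomial (Fin 3) k,
      φ (jb Ω f g) * jdet ψ = a • jb Ω (φ f) (φ g) := by
    intro f g
    have := aux_key ψ Ω f g
    rw [show ψ Ω = φ Ω from rfl, hφΩ, hsmul] at this
    exact this
  refine ⟨part1, ?_, ?_⟩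
  · -- Poisson automorphism → φ Ω = jdet * Ω
    intro hP
    -- find a nonzero bracket
    have hpd : ∃ i : Fin 3, pderiv i Ω ≠ 0 := by
      by_contra h
      push_neg at h
      have he := aux_euler hΩ
      simp only [h, mul_zero, Finset.sum_const_zero] at he
      have hdk : (d : k) ≠ 0 := Nat.cast_ne_zero.mpr hd.ne'
      exact hΩ0 (by
        have := he.symm
        rwa [smul_eq_zero_iff_right hdk] at this)
    obtain ⟨i, hi⟩ := hpd
    have hb : ∃ f g : MvPolynomial (Fin 3) k, jb Ω f g ≠ 0 := by
      fin_cases i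
      · exact ⟨X 1, X 2, by
          have : jb Ω (X 1) (X 2) = pderiv 0 Ω := by
            simp [jb, pderiv_X_of_ne (show (1:Fin 3) ≠ 0 by decide),
              pderiv_X_of_ne (show (2:Fin 3) ≠ 0 by decide),
              pderiv_X_of_ne (show (1:Fin 3) ≠ 2 by decide),
              pderiv_X_of_ne (show (2:Fin 3) ≠ 1 by decide)]
          rw [this]; exact hi⟩
      · exact ⟨X 0, X 2, by
          have : jb Ω (X 0) (X 2) = -pderiv 1 Ω := by
            simp [jb, pderiv_X_of_ne (show (0:Fin 3) ≠ 1 by decide),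
              pderiv_X_of_ne (show (0:Fin 3) ≠ 2 by decide),
              pderiv_X_of_ne (show (2:Fin 3) ≠ 0 by decide),
              pderiv_X_of_ne (show (2:Fin 3) ≠ 1 by decide)]
          rw [this]; simpa using hi⟩
      · exact ⟨X 0, X 1, by
          have : jb Ω (X 0) (X 1) = pderiv 2 Ω := by
            simp [jb, pderiv_X_of_ne (show (0:Fin 3) ≠ 1 by decide),
              pderiv_X_of_ne (show (0:Fin 3) ≠ 2 by decide),
              pderiv_X_of_ne (show (1:Fin 3) ≠ 0 by decide),
              pderiv_X_of_ne (show (1:Fin 3) ≠ 2 by decide)]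
          rw [this]; exact hi⟩
    obtain ⟨f, g, hfg⟩ := hb
    have h1 := part1 f g
    rw [← hP f g, smul_eq_C_mul, mul_comm (C a)] at h1
    have hφb : φ (jb Ω f g) ≠ 0 := by
      intro h
      exact hfg (by simpa using congrArg φ.symm h)
    have hJ : jdet ψ = C a := mul_left_cancel₀ hφb h1
    rw [hφΩ, hJ, smul_eq_C_mul]
  · -- φ Ω = jdet * Ω → Poisson automorphism
    intro hJΩ
    have hJ : jdet ψ = C a := by
      have : jdet ψ * Ω = C a * Ω := by
        rw [← hJΩ, hφΩ, smul_eq_C_mul]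
      exact mul_right_cancel₀ hΩ0 this
    intro f g
    have h1 := part1 f g
    rw [hJ, smul_eq_C_mul] at h1
    have hCa : (C a : MvPolynomial (Fin 3) k) ≠ 0 := by
      simpa using ha
    rw [mul_comm] at h1
    exact mul_left_cancel₀ hCa h1
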